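/- Define L_{j,n} = det(W^{j+1,n})/det(W^{j,n}) and R^n_{j+1} = det(U^r W^{j+1,n})/det(W^{j+1,n}). Then L_{j,n} = 1/(m₁ + γ_j R^n_{j+1}), and consequently γ_j/(m₁ + γ_j) < γ_j L_{j,n} < γ_j/(m₁(1 + γ_j)) whenever m₁ < R^n_{j+1} < 1. -/
import Mathlib
open MeasureTheory

noncomputable def Wgen (m γ : ℕ → ℝ) (shift start s : ℕ) : Matrix (Fin s) (Fin s) ℝ :=
  Matrix.of fun i k =>
    if (i : ℕ) = 0 then m ((k : ℕ) + 1 + shift)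
    else if (k : ℕ) + 1 = (i : ℕ) then -γ (start + (i : ℕ) - 1)
    else if (i : ℕ) ≤ (k : ℕ) then m ((k : ℕ) - (i : ℕ) + 1)
    else 0

lemma Wgen_det_rec (m γ : ℕ → ℝ) (σ st s : ℕ) :
    (Wgen m γ σ st (s+2)).det
      = m (1+σ) * (Wgen m γ 0 (st+1) (s+1)).det
        + γ st * (Wgen m γ (σ+1) (st+1) (s+1)).det := by
  rw [Matrix.det_succ_column_zero]
  rw [Fin.sum_univ_succ, Fin.sum_univ_succ]
  have h0 : (Wgen m γ σ st (s+2)).submatrix (Fin.succAbove 0) Fin.succ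
      = Wgen m γ 0 (st+1) (s+1) := by
    ext i k
    simp only [Matrix.submatrix_apply, Wgen, Matrix.of_apply, Fin.succAbove, Fin.succ]
    simp only [Fin.lt_def, Fin.coe_castSucc, Fin.val_zero, Fin.val_succ]
    split_ifs <;> simp_all
  have h1 : (Wgen m γ σ st (s+2)).submatrix (Fin.succAbove 1) Fin.succ
      = Wgen m γ (σ+1) (st+1) (s+1) := by
    ext i k
    simp only [Matrix.submatrix_apply, Wgen, Matrix.of_apply, Fin.succAbove, Fin.succ]
    simp only [Fin.lt_def, Fin.coe_castSucc, Fin.val_one, Fin.val_succ]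
    split_ifs <;> (try rfl) <;> (try (congr 1; omega)) <;> (try omega) <;> simp_all <;> omega
  have hz : ∀ i : Fin s, (Wgen m γ σ st (s+2)) (Fin.succ (Fin.succ i)) 0 = 0 := by
    intro i
    simp only [Wgen, Matrix.of_apply, Fin.val_succ, Fin.val_zero]
    split_ifs <;> simp_all
  have e0 : (Wgen m γ σ st (s+2)) 0 0 = m (1+σ) := by
    simp only [Wgen, Matrix.of_apply, Fin.val_zero, if_pos rfl]
    norm_num
  have e1 : (Wgen m γ σ st (s+2)) 1 0 = -γ st := by
    simp only [Wgen, Matrix.of_apply, Fin.val_zero, Fin.val_one]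
    norm_num
  rw [show (Fin.succ 0 : Fin (s+2)) = 1 from rfl]
  simp only [hz, h0, h1, e0, e1, mul_zero, zero_mul, Finset.sum_const_zero,
    Fin.val_zero, Fin.val_one, pow_zero, pow_one, add_zero]
  ring

lemma Wgen_det_pos (m γ : ℕ → ℝ) (hm : ∀ k, 0 < m k) (hγ : ∀ i, 0 < γ i) :
    ∀ s σ st, 0 < (Wgen m γ σ st s).det := by
  intro s
  induction s using Nat.strong_induction_on with
  | _ s ih =>
    intro σ st
    match s with
    | 0 => simp [Matrix.det_fin_zero]
    | 1 =>
      rw [Matrix.det_fin_one]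
      simpa [Wgen] using hm (1 + σ)
    | (t+2) =>
      rw [Wgen_det_rec]
      have h1 := ih (t+1) (by omega) 0 (st+1)
      have h2 := ih (t+1) (by omega) (σ+1) (st+1)
      have := hm (1+σ); have := hγ st
      positivity

lemma moments_pos (Q : Measure ℝ) [IsProbabilityMeasure Q] (hQsupp : Q (Set.Icc 0 1) = 1)
    (m : ℕ → ℝ) (hm : ∀ k, m k = ∫ x, x ^ k ∂Q) (hm1 : 0 < m 1) :
    ∀ k, 0 < m k := by
  have hae : ∀ᵐ x ∂Q, x ∈ Set.Icc (0:ℝ) 1 := by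
    rw [ae_iff]
    have : Q (Set.Icc (0:ℝ) 1)ᶜ = 0 := by
      rw [measure_compl measurableSet_Icc (measure_ne_top Q _), hQsupp,
        measure_univ, tsub_self]
    exact this
  have hint : ∀ k : ℕ, Integrable (fun x : ℝ => x ^ k) Q := by
    intro k
    apply Integrable.mono' (integrable_const (1:ℝ))
      (Continuous.aestronglyMeasurable (by continuity))
    filter_upwards [hae] with x hx
    rw [Real.norm_eq_abs, abs_pow]
    exact pow_le_one₀ (abs_nonneg x) (abs_le.2 ⟨by linarith [hx.1], hx.2⟩)
  intro k
  match k with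
  | 0 => simp [hm 0]
  | (k+1) =>
    have hnn : 0 ≤ᵐ[Q] fun x : ℝ => x ^ (k+1) := by
      filter_upwards [hae] with x hx
      exact pow_nonneg hx.1 _
    have hge : 0 ≤ m (k+1) := by
      rw [hm (k+1)]; exact integral_nonneg_of_ae hnn
    rcases lt_or_eq_of_le hge with h | h
    · exact h
    · exfalso
      have hz : (fun x : ℝ => x ^ (k+1)) =ᵐ[Q] 0 := by
        rw [← MeasureTheory.integral_eq_zero_iff_of_nonneg_ae hnn (hint (k+1)),
          ← hm (k+1)]
        exact h.symm
      have hx0 : (fun x : ℝ => x ^ 1) =ᵐ[Q] 0 := by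
        filter_upwards [hz] with x hx
        have : x = 0 := pow_eq_zero_iff (Nat.succ_ne_zero k) |>.1 hx
        simp [this]
      have : m 1 = 0 := by
        rw [hm 1, integral_congr_ae hx0]
        simp
      linarith

theorem stmt13 (Q : Measure ℝ) [IsProbabilityMeasure Q] (hQsupp : Q (Set.Icc 0 1) = 1)
    (m : ℕ → ℝ) (hm : ∀ k, m k = ∫ x, x ^ k ∂Q)
    (hm1 : m 1 ∈ Set.Ioo (0 : ℝ) 1)
    (γ : ℕ → ℝ) (hγ : ∀ i, 0 < γ i)
    (j s : ℕ) (hj : 1 ≤ j) :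
    let R : ℝ := (Wgen m γ 1 (j + 1) (s + 1)).det / (Wgen m γ 0 (j + 1) (s + 1)).det
    let L : ℝ := (Wgen m γ 0 (j + 1) (s + 1)).det / (Wgen m γ 0 j (s + 2)).det
    L = 1 / (m 1 + γ j * R) ∧
    (m 1 < R → R < 1 →
      γ j / (m 1 + γ j) < γ j * L ∧ γ j * L < γ j / (m 1 * (1 + γ j))) := by
  intro R L
  have hmpos := moments_pos Q hQsupp m hm hm1.1
  set A := (Wgen m γ 0 (j + 1) (s + 1)).det with hAdef
  set C := (Wgen m γ 1 (j + 1) (s + 1)).det with hCdef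
  set B := (Wgen m γ 0 j (s + 2)).det with hBdef
  have hA : 0 < A := Wgen_det_pos m γ hmpos hγ _ _ _
  have hC : 0 < C := Wgen_det_pos m γ hmpos hγ _ _ _
  have hB : 0 < B := Wgen_det_pos m γ hmpos hγ _ _ _
  have hrec : B = m 1 * A + γ j * C := by
    rw [hBdef, Wgen_det_rec m γ 0 j s]
  have hRdef : R = C / A := rfl
  have hLdef : L = A / B := rfl
  have hm1p : 0 < m 1 := hm1.1
  have hγj : 0 < γ j := hγ j
  have hd : m 1 + γ j * R = B / A := by
    rw [hRdef, hrec]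
    field_simp
  have part1 : L = 1 / (m 1 + γ j * R) := by
    rw [hLdef, hd, one_div_div]
  refine ⟨part1, fun h1 h2 => ?_⟩
  have hden1 : 0 < m 1 + γ j * R := by
    have hRpos : 0 < R := lt_trans hm1p h1
    have : 0 < γ j * R := mul_pos hγj hRpos
    linarith
  have hγL : γ j * L = γ j / (m 1 + γ j * R) := by
    rw [part1]; ring
  have hub : m 1 + γ j * R < m 1 + γ j := by
    have := mul_lt_mul_of_pos_left h2 hγj
    linarith
  have hlb : m 1 * (1 + γ j) < m 1 + γ j * R := by
    have := mul_lt_mul_of_pos_left h1 hγj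
    nlinarith
  constructor
  · rw [hγL]
    exact div_lt_div_of_pos_left hγj hden1 hub
  · rw [hγL]
    have hpos : 0 < m 1 * (1 + γ j) := by nlinarith
    exact div_lt_div_of_pos_left hγj hpos hlb
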